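/- Let ω > 0 with π/ω irrational. Then the power series ∑_{ℓ≥1} x^ℓ / sin(ℓω) has radius of convergence equal to 1 if and only if π/ω is not an exponential Liouville number. -/

import Mathlib

open Real Filter

/-- A real number is an exponential Liouville number if it is irrational and
there exists `c > 0` and infinitely many pairs `(p,q) ∈ ℤ × ℕ*` with
`0 < |a - p/q| < e^{-cq}`. -/
def IsExpLiouville (a : ℝ) : Prop :=
  Irrational a ∧ ∃ c : ℝ, 0 < c ∧
    {pq : ℤ × ℕ | 0 < pq.2 ∧ 0 < |a - (pq.1 : ℝ) / (pq.2 : ℝ)| ∧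
      |a - (pq.1 : ℝ) / (pq.2 : ℝ)| < Real.exp (-(c * pq.2))}.Infinite

private lemma sinNe {ω : ℝ} (hω : 0 < ω) (hirr : Irrational (π / ω))
    {k : ℕ} (hk : 0 < k) : Real.sin ((k : ℝ) * ω) ≠ 0 := by
  intro h
  rw [Real.sin_eq_zero_iff] at h
  obtain ⟨m, hm⟩ := h
  have hk' : (0 : ℝ) < (k : ℝ) := by exact_mod_cast hk
  have hπ := Real.pi_pos
  have hm0 : (0 : ℝ) < (m : ℝ) := by nlinarith [mul_pos hk' hω]
  refine hirr ⟨(k : ℚ) / (m : ℚ), ?_⟩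
  push_cast
  rw [div_eq_div_iff hm0.ne' hω.ne']
  linarith

private lemma abs_sin_sub_int (y : ℝ) (n : ℤ) :
    |Real.sin y| = |Real.sin (y - n * π)| := by
  have h := Real.sin_add_int_mul_pi (y - n * π) n
  rw [show y - (n : ℝ) * π + (n : ℝ) * π = y by ring] at h
  rw [h, abs_mul]
  rcases Int.even_or_odd n with he | ho
  · rw [he.neg_one_zpow, abs_one, one_mul]
  · rw [Odd.neg_one_zpow ho, abs_neg, abs_one, one_mul]

private lemma divergeAux {ω : ℝ} (hω : 0 < ω) (hirr : Irrational (π / ω))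
    {x : ℝ} (hx : 1 < |x|) :
    ¬ Summable (fun ℓ : ℕ => x ^ (ℓ + 1) / Real.sin ((ℓ + 1 : ℕ) * ω)) := by
  intro hs
  have h0 : Filter.Tendsto
      (fun n : ℕ => |x ^ (n + 1) / Real.sin ((n + 1 : ℕ) * ω)|) atTop (nhds 0) := by
    simpa using hs.tendsto_atTop_zero.abs
  have hev : ∀ᶠ n : ℕ in atTop,
      |x ^ (n + 1) / Real.sin ((n + 1 : ℕ) * ω)| < 1 :=
    h0.eventually_lt_const one_pos
  obtain ⟨n, hn⟩ := hev.exists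
  have hsne : Real.sin ((n + 1 : ℕ) * ω) ≠ 0 := sinNe hω hirr (Nat.succ_pos n)
  have hs1 : |Real.sin ((n + 1 : ℕ) * ω)| ≤ 1 := Real.abs_sin_le_one _
  have hs0 : 0 < |Real.sin ((n + 1 : ℕ) * ω)| := abs_pos.mpr hsne
  have hx1 : 1 ≤ |x| ^ (n + 1) := one_le_pow₀ hx.le
  rw [abs_div, abs_pow, div_lt_one hs0] at hn
  linarith

set_option maxHeartbeats 1000000 in
private lemma badAux {ω : ℝ} (hω : 0 < ω) (hirr : Irrational (π / ω))
    (hL : IsExpLiouville (π / ω)) :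
    ∃ x : ℝ, |x| < 1 ∧
      ¬ Summable (fun ℓ : ℕ => x ^ (ℓ + 1) / Real.sin ((ℓ + 1 : ℕ) * ω)) := by
  obtain ⟨-, c, hc, hinf⟩ := hL
  set a := π / ω with ha_def
  have hπ := Real.pi_pos
  have ha : 0 < a := div_pos hπ hω
  -- q is unbounded among the good pairs
  have hub : ∀ Q : ℕ, ∃ pq : ℤ × ℕ,
      (0 < pq.2 ∧ 0 < |a - (pq.1 : ℝ) / (pq.2 : ℝ)| ∧
        |a - (pq.1 : ℝ) / (pq.2 : ℝ)| < Real.exp (-(c * pq.2))) ∧ Q < pq.2 := by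
    intro Q
    by_contra hcon
    push_neg at hcon
    refine hinf ?_
    refine Set.Finite.subset
      ((Set.finite_Icc (-(⌈(a + 1) * (Q : ℝ)⌉)) ⌈(a + 1) * (Q : ℝ)⌉).prod
        (Set.finite_Icc 0 Q)) ?_
    rintro ⟨p, q⟩ ⟨hq0, h1, h2⟩
    have hqQ : q ≤ Q := hcon (p, q) ⟨hq0, h1, h2⟩
    have hqR : (0 : ℝ) < (q : ℝ) := by exact_mod_cast hq0
    have hexp : Real.exp (-(c * q)) ≤ 1 :=
      Real.exp_le_one_iff.mpr (by nlinarith)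
    have hlt1 : |a - (p : ℝ) / q| < 1 := lt_of_lt_of_le h2 hexp
    have habs : |(p : ℝ) / q| ≤ a + 1 := by
      have := abs_sub_abs_le_abs_sub ((p : ℝ) / q) a
      rw [abs_sub_comm] at this
      rw [abs_of_pos ha] at *
      linarith [this, hlt1, abs_nonneg (a - (p : ℝ) / q)]
    have hpb : |(p : ℝ)| ≤ (a + 1) * q := by
      rw [abs_div, abs_of_pos hqR] at habs
      rw [div_le_iff₀ hqR] at habs
      exact habs
    have hpQ : |(p : ℝ)| ≤ (a + 1) * Q := by
      have hq' : (q : ℝ) ≤ Q := by exact_mod_cast hqQ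
      nlinarith [abs_nonneg (p : ℝ)]
    have hpI : |p| ≤ ⌈(a + 1) * (Q : ℝ)⌉ := by
      have : ((|p| : ℤ) : ℝ) ≤ ((⌈(a + 1) * (Q : ℝ)⌉ : ℤ) : ℝ) := by
        rw [Int.cast_abs]
        exact hpQ.trans (Int.le_ceil _)
      exact_mod_cast this
    exact ⟨abs_le.mp hpI, Nat.zero_le q, hqQ⟩
  -- eventual smallness facts
  have hev1 : ∀ᶠ q : ℕ in atTop, Real.exp (-(c * q)) < a / 2 := by
    have heq : (fun q : ℕ => Real.exp (-(c * q))) = fun q : ℕ => Real.exp (-c) ^ q := by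
      funext q
      rw [← Real.exp_nat_mul]
      ring_nf
    have ht : Filter.Tendsto (fun q : ℕ => Real.exp (-(c * q))) atTop (nhds 0) := by
      rw [heq]
      exact tendsto_pow_atTop_nhds_zero_of_lt_one (Real.exp_pos _).le
        (Real.exp_lt_one_iff.mpr (by linarith))
    exact ht.eventually_lt_const (half_pos ha)
  have hev2 : ∀ᶠ q : ℕ in atTop, ω * q * Real.exp (-(c / 2 * q)) < 1 := by
    have hu : Filter.Tendsto (fun t : ℝ => t ^ 1 * Real.exp (-t)) atTop (nhds 0) :=
      Real.tendsto_pow_mul_exp_neg_atTop_nhds_zero 1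
    have hv : Filter.Tendsto (fun q : ℕ => c / 2 * (q : ℝ)) atTop atTop :=
      (tendsto_natCast_atTop_atTop (R := ℝ)).const_mul_atTop (by linarith)
    have ht0 : Filter.Tendsto
        (fun q : ℕ => (c / 2 * (q : ℝ)) ^ 1 * Real.exp (-(c / 2 * (q : ℝ)))) atTop (nhds 0) :=
      hu.comp hv
    have ht : Filter.Tendsto
        (fun q : ℕ => ω * q * Real.exp (-(c / 2 * q))) atTop (nhds 0) := by
      have := ht0.const_mul (2 * ω / c)
      rw [mul_zero] at this
      refine this.congr fun q => ?_
      have hc0 : c ≠ 0 := hc.ne'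
      field_simp
    exact ht.eventually_lt_const one_pos
  obtain ⟨Q₁, hQ₁⟩ := eventually_atTop.mp (hev1.and hev2)
  set c' : ℝ := c / (2 * (a + 1)) with hc'_def
  have hc' : 0 < c' := by
    apply div_pos hc
    nlinarith
  -- key: arbitrarily large ℓ with very small sin (ℓ ω)
  have key : ∀ N : ℕ, ∃ ℓ : ℕ, N ≤ ℓ ∧ 0 < ℓ ∧
      |Real.sin ((ℓ : ℝ) * ω)| < Real.exp (-(c' * ℓ)) := by
    intro N
    obtain ⟨⟨p, q⟩, ⟨hq0, h1, h2⟩, hqQ⟩ := hub (max Q₁ ⌈(2 * N) / a⌉₊)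
    have hq1 : Q₁ ≤ q := le_of_lt (lt_of_le_of_lt (le_max_left _ _) hqQ)
    obtain ⟨hE1, hE2⟩ := hQ₁ q hq1
    have hqN : (2 * N) / a ≤ q := by
      have h := (le_max_right Q₁ ⌈(2 * N) / a⌉₊).trans hqQ.le
      exact (Nat.ceil_le.mp h)
    have hqR : (0 : ℝ) < (q : ℝ) := by exact_mod_cast hq0
    have hlt : |a - (p : ℝ) / q| < a / 2 := h2.trans hE1
    have hA := abs_lt.mp hlt
    have hpq_lb : a / 2 < (p : ℝ) / q := by linarith [hA.2]
    have hexp1 : Real.exp (-(c * (q : ℝ))) ≤ 1 := Real.exp_le_one_iff.mpr (by nlinarith)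
    have hA' := abs_lt.mp (h2.trans_le hexp1)
    have hpq_ub : (p : ℝ) / q < a + 1 := by linarith [hA'.1]
    have hp_lb : a / 2 * q < (p : ℝ) := by
      have := mul_lt_mul_of_pos_right hpq_lb hqR
      rwa [div_mul_cancel₀ _ hqR.ne'] at this
    have hp_ub : (p : ℝ) < (a + 1) * q := by
      have := mul_lt_mul_of_pos_right hpq_ub hqR
      rwa [div_mul_cancel₀ _ hqR.ne'] at this
    have hp_pos : 0 < p := by
      have : (0 : ℝ) < (p : ℝ) := lt_of_le_of_lt (by positivity) hp_lb
      exact_mod_cast this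
    have hpt : ((p.toNat : ℕ) : ℝ) = (p : ℝ) := by
      exact_mod_cast Int.toNat_of_nonneg hp_pos.le
    refine ⟨p.toNat, ?_, by omega, ?_⟩
    · have hNp : (N : ℝ) ≤ (p : ℝ) := by
        have h3 : a / 2 * ((2 * N) / a) ≤ a / 2 * q :=
          mul_le_mul_of_nonneg_left hqN (by positivity)
        have h4 : a / 2 * ((2 * N) / a) = (N : ℝ) := by
          field_simp
        linarith
      have : (N : ℝ) ≤ ((p.toNat : ℕ) : ℝ) := by rw [hpt]; exact hNp
      exact_mod_cast this
    · -- the sine bound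
      rw [hpt]
      have hsin_eq : |Real.sin ((p : ℝ) * ω)| = |Real.sin ((p : ℝ) * ω - (q : ℤ) * π)| :=
        abs_sin_sub_int _ (q : ℤ)
      have hωa : ω * a = π := by
        rw [ha_def]
        field_simp
      have hdist : |(p : ℝ) * ω - (q : ℝ) * π| = ω * q * |a - (p : ℝ) / q| := by
        rw [show (p : ℝ) * ω - (q : ℝ) * π = -((ω * q) * (a - (p : ℝ) / q)) by
          rw [ha_def]
          field_simp
          ring]
        rw [abs_neg, abs_mul, abs_of_pos (mul_pos hω hqR)]
      have hstep1 : |Real.sin ((p : ℝ) * ω)| ≤ ω * q * |a - (p : ℝ) / q| := by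
        rw [hsin_eq]
        calc |Real.sin ((p : ℝ) * ω - (q : ℤ) * π)| ≤ |(p : ℝ) * ω - (q : ℤ) * π| :=
              Real.abs_sin_le_abs
          _ = ω * q * |a - (p : ℝ) / q| := by
              rw [show ((q : ℤ) : ℝ) = (q : ℝ) by push_cast; ring]
              exact hdist
      have hstep2 : ω * q * |a - (p : ℝ) / q| < ω * q * Real.exp (-(c * q)) :=
        mul_lt_mul_of_pos_left h2 (mul_pos hω hqR)
      have hstep3 : ω * q * Real.exp (-(c * q)) ≤ Real.exp (-(c / 2 * q)) := by
        have hsplit : Real.exp (-(c * q)) =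
            Real.exp (-(c / 2 * q)) * Real.exp (-(c / 2 * q)) := by
          rw [← Real.exp_add]
          ring_nf
        rw [hsplit]
        have := mul_le_mul_of_nonneg_right hE2.le (Real.exp_pos (-(c / 2 * q))).le
        calc ω * q * (Real.exp (-(c / 2 * q)) * Real.exp (-(c / 2 * q)))
            = ω * q * Real.exp (-(c / 2 * q)) * Real.exp (-(c / 2 * q)) := by ring
          _ ≤ 1 * Real.exp (-(c / 2 * q)) := this
          _ = Real.exp (-(c / 2 * q)) := one_mul _
      have hstep4 : Real.exp (-(c / 2 * q)) < Real.exp (-(c' * p)) := by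
        apply Real.exp_lt_exp.mpr
        rw [hc'_def]
        rw [neg_lt_neg_iff]
        rw [div_mul_eq_mul_div, div_lt_iff₀ (by linarith : (0 : ℝ) < 2 * (a + 1))]
        nlinarith [mul_lt_mul_of_pos_left hp_ub hc]
      calc |Real.sin ((p : ℝ) * ω)| ≤ ω * q * |a - (p : ℝ) / q| := hstep1
        _ < ω * q * Real.exp (-(c * q)) := hstep2
        _ ≤ Real.exp (-(c / 2 * q)) := hstep3
        _ < Real.exp (-(c' * p)) := hstep4
  -- now build the bad x
  refine ⟨Real.exp (-(c' / 2)), ?_, ?_⟩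
  · rw [abs_of_pos (Real.exp_pos _)]
    exact Real.exp_lt_one_iff.mpr (by linarith)
  · intro hs
    have h0 : Filter.Tendsto
        (fun n : ℕ => |Real.exp (-(c' / 2)) ^ (n + 1) / Real.sin ((n + 1 : ℕ) * ω)|)
        atTop (nhds 0) := by
      simpa using hs.tendsto_atTop_zero.abs
    have hev : ∀ᶠ n : ℕ in atTop,
        |Real.exp (-(c' / 2)) ^ (n + 1) / Real.sin ((n + 1 : ℕ) * ω)| < 1 :=
      h0.eventually_lt_const one_pos
    obtain ⟨M, hM⟩ := eventually_atTop.mp hev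
    obtain ⟨ℓ, hℓN, hℓ0, hℓsin⟩ := key (M + 1)
    have hn1 : ℓ - 1 + 1 = ℓ := Nat.succ_pred_eq_of_pos hℓ0
    have hlow := hM (ℓ - 1) (by omega)
    rw [hn1] at hlow
    have hsin_pos : 0 < |Real.sin ((ℓ : ℝ) * ω)| := abs_pos.mpr (sinNe hω hirr hℓ0)
    have hnum : |Real.exp (-(c' / 2)) ^ ℓ| = Real.exp ((ℓ : ℝ) * -(c' / 2)) := by
      rw [abs_pow, abs_of_pos (Real.exp_pos _), ← Real.exp_nat_mul]
    rw [abs_div, hnum, div_lt_one hsin_pos] at hlow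
    have hexp_le : Real.exp (-(c' * ℓ)) ≤ Real.exp ((ℓ : ℝ) * -(c' / 2)) := by
      apply Real.exp_le_exp.mpr
      have : (0 : ℝ) ≤ ℓ := by positivity
      nlinarith
    linarith [hℓsin.trans_le hexp_le]

set_option maxHeartbeats 1000000 in
private lemma goodAux {ω : ℝ} (hω : 0 < ω) (hirr : Irrational (π / ω))
    (hnl : ¬ IsExpLiouville (π / ω)) :
    ∀ x : ℝ, |x| < 1 →
      Summable (fun ℓ : ℕ => x ^ (ℓ + 1) / Real.sin ((ℓ + 1 : ℕ) * ω)) := by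
  intro x hx
  rcases eq_or_ne x 0 with rfl | hx0
  · have : (fun ℓ : ℕ => (0 : ℝ) ^ (ℓ + 1) / Real.sin ((ℓ + 1 : ℕ) * ω)) =
        fun _ => (0 : ℝ) := by
      funext ℓ
      simp
    rw [this]
    exact summable_zero
  set a := π / ω with ha_def
  have hπ := Real.pi_pos
  have ha : 0 < a := div_pos hπ hω
  have hxa : 0 < |x| := abs_pos.mpr hx0
  have hlog : Real.log |x| < 0 := Real.log_neg hxa hx
  set C : ℝ := ω / π + 1 with hC_def
  have hC0 : 0 < C := by positivity
  set c : ℝ := -Real.log |x| / (2 * C) with hc_def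
  have hc : 0 < c := div_pos (by linarith) (by positivity)
  have hfin : {pq : ℤ × ℕ | 0 < pq.2 ∧ 0 < |a - (pq.1 : ℝ) / (pq.2 : ℝ)| ∧
      |a - (pq.1 : ℝ) / (pq.2 : ℝ)| < Real.exp (-(c * pq.2))}.Finite := by
    rw [← Set.not_infinite]
    intro hinf
    exact hnl ⟨hirr, c, hc, hinf⟩
  obtain ⟨Q, hQ⟩ := (hfin.image Prod.snd).bddAbove
  have hQ' : ∀ p : ℤ, ∀ q : ℕ, Q < q → 0 < q →
      Real.exp (-(c * q)) ≤ |a - (p : ℝ) / q| := by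
    intro p q hq hq0
    by_contra hcon
    push_neg at hcon
    have habs : 0 < |a - (p : ℝ) / q| := by
      rw [abs_pos, sub_ne_zero]
      intro he
      exact hirr ⟨(p : ℚ) / (q : ℚ), by push_cast; exact he.symm⟩
    have hmem : q ∈ Prod.snd '' {pq : ℤ × ℕ | 0 < pq.2 ∧
        0 < |a - (pq.1 : ℝ) / (pq.2 : ℝ)| ∧
        |a - (pq.1 : ℝ) / (pq.2 : ℝ)| < Real.exp (-(c * pq.2))} :=
      ⟨(p, q), ⟨hq0, habs, hcon⟩, rfl⟩
    exact absurd (hQ hmem) (not_le.mpr hq)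
  set r : ℝ := |x| * Real.exp (c * C) with hr_def
  have hr1 : r < 1 := by
    have hcC : c * C = -Real.log |x| / 2 := by
      rw [hc_def]
      field_simp
    calc r = Real.exp (Real.log |x|) * Real.exp (c * C) := by
          rw [Real.exp_log hxa]
      _ = Real.exp (Real.log |x| + c * C) := (Real.exp_add _ _).symm
      _ < 1 := Real.exp_lt_one_iff.mpr (by rw [hcC]; linarith)
  have hr0 : 0 ≤ r := by positivity
  refine Summable.of_norm_bounded_eventually_nat
    (g := fun n => π / (2 * ω) * r ^ (n + 1)) ?_ ?_
  · have heq : (fun n : ℕ => π / (2 * ω) * r ^ (n + 1)) =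
        fun n : ℕ => (π / (2 * ω) * r) * r ^ n := by
      funext n
      ring
    rw [heq]
    exact (summable_geometric_of_lt_one hr0 hr1).mul_left _
  · rw [eventually_atTop]
    refine ⟨⌈((Q : ℝ) + 3 / 2) * π / ω⌉₊ + 1, fun n hn => ?_⟩
    have hℓ1 : (1 : ℝ) ≤ (n + 1 : ℕ) := by exact_mod_cast Nat.succ_le_succ (Nat.zero_le n)
    have hℓR : ((Q : ℝ) + 3 / 2) * π / ω ≤ ((n + 1 : ℕ) : ℝ) := by
      calc ((Q : ℝ) + 3 / 2) * π / ω ≤ (⌈((Q : ℝ) + 3 / 2) * π / ω⌉₊ : ℝ) := Nat.le_ceil _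
        _ ≤ ((n + 1 : ℕ) : ℝ) := by exact_mod_cast by omega
    set ℓ : ℕ := n + 1 with hℓ_def
    have hθ : (Q : ℝ) + 3 / 2 ≤ (ℓ : ℝ) * ω / π := by
      rw [le_div_iff₀ hπ]
      rw [div_le_iff₀ hω] at hℓR
      linarith
    set qz : ℤ := round ((ℓ : ℝ) * ω / π) with hqz_def
    have hround : |(ℓ : ℝ) * ω / π - qz| ≤ 1 / 2 := abs_sub_round _
    have hrA := abs_le.mp hround
    have hqz_lb : (Q : ℝ) + 1 ≤ (qz : ℝ) := by linarith [hrA.2]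
    have hqz_pos : 0 < qz := by
      have : (0 : ℝ) < (qz : ℝ) := by
        have : (0 : ℝ) ≤ (Q : ℝ) := Nat.cast_nonneg Q
        linarith
      exact_mod_cast this
    set q : ℕ := qz.toNat with hq_def
    have hqcast : ((q : ℕ) : ℝ) = (qz : ℝ) := by
      rw [hq_def]
      exact_mod_cast Int.toNat_of_nonneg hqz_pos.le
    have hqQ : Q < q := by
      have : (Q : ℝ) < ((q : ℕ) : ℝ) := by rw [hqcast]; linarith
      exact_mod_cast this
    have hq0 : 0 < q := lt_of_le_of_lt (Nat.zero_le Q) hqQ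
    have hqR : (0 : ℝ) < (q : ℝ) := by exact_mod_cast hq0
    have hbound := hQ' (ℓ : ℤ) q hqQ hq0
    rw [show (((ℓ : ℕ) : ℤ) : ℝ) = (ℓ : ℝ) by push_cast; ring] at hbound
    -- |δ| ≤ π/2
    have hδle : |(ℓ : ℝ) * ω - qz * π| ≤ π / 2 := by
      have h1 : |(ℓ : ℝ) * ω / π - qz| * π ≤ 1 / 2 * π :=
        mul_le_mul_of_nonneg_right hround hπ.le
      have h0 : (ℓ : ℝ) * ω - qz * π = ((ℓ : ℝ) * ω / π - qz) * π := by
        field_simp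
      have h2 : |(ℓ : ℝ) * ω - qz * π| = |(ℓ : ℝ) * ω / π - qz| * π := by
        rw [h0, abs_mul, abs_of_pos hπ]
      rw [h2]
      linarith
    have hsin_eq : |Real.sin ((ℓ : ℝ) * ω)| = |Real.sin ((ℓ : ℝ) * ω - qz * π)| :=
      abs_sin_sub_int _ qz
    have hjordan : 2 / π * |(ℓ : ℝ) * ω - qz * π| ≤ |Real.sin ((ℓ : ℝ) * ω - qz * π)| :=
      Real.mul_abs_le_abs_sin hδle
    have hωa : ω * a = π := by
      rw [ha_def]
      field_simp
    have hdist : |(ℓ : ℝ) * ω - qz * π| = ω * q * |a - (ℓ : ℝ) / q| := by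
      rw [show (ℓ : ℝ) * ω - qz * π = -((ω * q) * (a - (ℓ : ℝ) / q)) by
        rw [← hqcast, ha_def]
        field_simp
        ring]
      rw [abs_neg, abs_mul, abs_of_pos (mul_pos hω hqR)]
    have hq_ub : (q : ℝ) ≤ C * ℓ := by
      have e : (ℓ : ℝ) * ω / π = (ℓ : ℝ) * (ω / π) := by ring
      have h3 : (qz : ℝ) ≤ (ℓ : ℝ) * (ω / π) + 1 / 2 := by
        rw [← e]
        linarith [hrA.1]
      have hℓ1' : (1 : ℝ) ≤ (ℓ : ℝ) := hℓ1
      calc (q : ℝ) = (qz : ℝ) := hqcast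
        _ ≤ (ℓ : ℝ) * (ω / π) + (ℓ : ℝ) := by linarith
        _ = C * ℓ := by rw [hC_def]; ring
    have hsin_lb : 2 * ω / π * Real.exp (-(c * C * ℓ)) ≤ |Real.sin ((ℓ : ℝ) * ω)| := by
      rw [hsin_eq]
      refine le_trans ?_ hjordan
      rw [hdist]
      have h1 : Real.exp (-(c * C * ℓ)) ≤ Real.exp (-(c * q)) := by
        apply Real.exp_le_exp.mpr
        have := mul_le_mul_of_nonneg_left hq_ub hc.le
        linarith
      have h2 : Real.exp (-(c * C * ℓ)) ≤ |a - (ℓ : ℝ) / q| := h1.trans hbound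
      have hq1R : (1 : ℝ) ≤ (q : ℝ) := by exact_mod_cast hq0
      calc 2 * ω / π * Real.exp (-(c * C * ℓ))
          ≤ 2 * ω / π * |a - (ℓ : ℝ) / q| :=
            mul_le_mul_of_nonneg_left h2 (by positivity)
        _ ≤ 2 * ω / π * ((q : ℝ) * |a - (ℓ : ℝ) / q|) := by
            have := le_mul_of_one_le_left (abs_nonneg (a - (ℓ : ℝ) / q)) hq1R
            exact mul_le_mul_of_nonneg_left this (by positivity)
        _ = 2 / π * (ω * q * |a - (ℓ : ℝ) / q|) := by ring
    have hden_pos : 0 < 2 * ω / π * Real.exp (-(c * C * ℓ)) := by positivity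
    have hsin_pos : 0 < |Real.sin ((ℓ : ℝ) * ω)| := lt_of_lt_of_le hden_pos hsin_lb
    rw [Real.norm_eq_abs, abs_div, abs_pow]
    show |x| ^ ℓ / |Real.sin ((ℓ : ℕ) * ω)| ≤ π / (2 * ω) * r ^ ℓ
    calc |x| ^ ℓ / |Real.sin ((ℓ : ℝ) * ω)|
        ≤ |x| ^ ℓ / (2 * ω / π * Real.exp (-(c * C * ℓ))) := by
          gcongr
      _ = π / (2 * ω) * r ^ ℓ := by
          rw [hr_def, mul_pow, ← Real.exp_nat_mul]
          have hinv : Real.exp (-(c * C * (ℓ : ℝ))) = (Real.exp ((ℓ : ℝ) * (c * C)))⁻¹ := by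
            rw [show -(c * C * (ℓ : ℝ)) = -((ℓ : ℝ) * (c * C)) by ring, Real.exp_neg]
          rw [hinv]
          rw [div_eq_iff (by positivity : (2 * ω / π * (Real.exp ((ℓ : ℝ) * (c * C)))⁻¹) ≠ 0)]
          field_simp

theorem radius_sin_series_eq_one_iff (ω : ℝ) (hω : 0 < ω)
    (hirr : Irrational (π / ω)) :
    ((∀ x : ℝ, |x| < 1 →
        Summable (fun ℓ : ℕ => x ^ (ℓ + 1) / Real.sin ((ℓ + 1 : ℕ) * ω))) ∧
     (∀ x : ℝ, 1 < |x| →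
        ¬ Summable (fun ℓ : ℕ => x ^ (ℓ + 1) / Real.sin ((ℓ + 1 : ℕ) * ω))))
    ↔ ¬ IsExpLiouville (π / ω) := by
  constructor
  · rintro ⟨hsum, -⟩ hL
    obtain ⟨x, hx1, hns⟩ := badAux hω hirr hL
    exact hns (hsum x hx1)
  · intro hnl
    exact ⟨goodAux hω hirr hnl, fun x hx => divergeAux hω hirr hx⟩
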